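/- arXiv:1109.0626 — 2 statements merged into one kernel-verified Lean document; each statement's English description precedes it below -/
import Mathlib

section
/- Let l be a Lie algebra over a field K of characteristic zero and E, F ∈ l with H := [E,F], [H,E] = 2E, [H,F] = -2F. Then in the universal enveloping algebra U(l), for all ℓ, m ∈ N: E^(ℓ) F^(m) = Σ_{s=0}^{min(ℓ,m)} F^(m-s) · C(H - m - ℓ + 2s, s) · E^(ℓ-s), where X^(k) := X^k/k! and C(H - c, s) := (H-c)(H-c-1)⋯(H-c-s+1)/s!. -/
noncomputable section

/-- The divided power `x^(k) := x^k / k!` in a `K`-algebra. -/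
def dividedPow (K : Type) [Field K] {A : Type} [Ring A] [Algebra K A] (x : A) (k : ℕ) : A :=
  (k.factorial : K)⁻¹ • x ^ k

/-- The binomial coefficient `C(x - c, s) = (x-c)(x-c-1)⋯(x-c-s+1)/s!` of an algebra
element `x` shifted by scalars: here we take the ordered product of the factors
`x - (c + j)`, `j = 0, …, s-1` (they commute with each other), divided by `s!`. -/
def binomOf (K : Type) [Field K] {A : Type} [Ring A] [Algebra K A] (x : A) (c : K) (s : ℕ) : A :=
  (s.factorial : K)⁻¹ •
    ((List.range s).map (fun j => x - algebraMap K A (c + (j : K)))).prod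

end

noncomputable section Aux

variable {K : Type} [Field K] [CharZero K] {A : Type} [Ring A] [Algebra K A]

/-- the product of linear factors `(x - c)(x - c - 1) ⋯ (x - c - s + 1)`. -/
def linF (K : Type) [Field K] {A : Type} [Ring A] [Algebra K A] (x : A) (c : K) (s : ℕ) : A :=
  ((List.range s).map (fun j => x - algebraMap K A (c + (j : K)))).prod

lemma binomOf_eq (x : A) (c : K) (s : ℕ) :
    binomOf K x c s = (s.factorial : K)⁻¹ • linF K x c s := rfl

@[simp] lemma linF_zero (x : A) (c : K) : linF K x c 0 = 1 := rfl

lemma linF_succ (x : A) (c : K) (s : ℕ) :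
    linF K x c (s + 1) = linF K x c s * (x - algebraMap K A (c + s)) := by
  unfold linF
  simp [List.range_succ]

lemma commute_linF (x : A) (a c : K) (s : ℕ) :
    Commute (x - algebraMap K A a) (linF K x c s) := by
  induction s with
  | zero => exact Commute.one_right _
  | succ n ih =>
    rw [linF_succ]
    exact ih.mul_right
      (((Commute.refl x).sub_right (Algebra.commute_algebraMap_right _ _)).sub_left
        ((Algebra.commute_algebraMap_left _ _).sub_right (Algebra.commute_algebraMap_left _ _)))

lemma linF_pascal (x : A) (c : K) (s : ℕ) :
    linF K x (c - 1) (s + 1) = linF K x c (s + 1) + ((s : K) + 1) • linF K x c s := by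
  induction s with
  | zero =>
    simp [linF_succ, map_sub, map_one, sub_sub_cancel]
    abel
  | succ n ih =>
    have hc : c - 1 + ((n : K) + 1) = c + n := by ring
    rw [linF_succ, ih, Nat.cast_succ, hc, add_mul, smul_mul_assoc, ← linF_succ,
      linF_succ x c (n + 1), Nat.cast_succ,
      show x - algebraMap K A (c + (n : K))
        = (x - algebraMap K A (c + ((n : K) + 1))) + 1 by
          rw [show c + ((n : K) + 1) = (c + (n : K)) + 1 from by ring]; simp only [map_add, map_one]; abel,
      mul_add, mul_one]
    module

lemma fact_cast_succ (s : ℕ) : (((s+1).factorial : ℕ) : K) = ((s : K)+1) * (s.factorial : K) := by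
  rw [Nat.factorial_succ]; push_cast; ring

lemma fact_cast_ne_zero (s : ℕ) : ((s.factorial : ℕ) : K) ≠ 0 :=
  Nat.cast_ne_zero.2 (Nat.factorial_ne_zero s)

@[simp] lemma binom_zero' (x : A) (c : K) : binomOf K x c 0 = 1 := by
  simp [binomOf]

lemma binom_pascal (x : A) (c : K) (s : ℕ) :
    binomOf K x (c-1) (s+1) = binomOf K x c (s+1) + binomOf K x c s := by
  have h1 : ((s:K)+1) ≠ 0 := Nat.cast_add_one_ne_zero s
  have h3 : ((((s+1).factorial : ℕ)) : K)⁻¹ * ((s:K)+1) = (((s.factorial : ℕ)) : K)⁻¹ := by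
    rw [fact_cast_succ, mul_inv, mul_comm (((s:K)+1))⁻¹, mul_assoc, inv_mul_cancel₀ h1, mul_one]
  rw [binomOf_eq, binomOf_eq, binomOf_eq, linF_pascal, smul_add, smul_smul, h3]

lemma binom_absorb (x : A) (c : K) (s : ℕ) :
    ((s : K)+1) • binomOf K x c (s+1) = (x - algebraMap K A (c + s)) * binomOf K x c s := by
  rw [binomOf_eq, binomOf_eq, linF_succ, ← (commute_linF x (c + s) c s).eq,
    smul_smul, mul_smul_comm, fact_cast_succ, mul_inv]
  congr 1
  rw [← mul_assoc, mul_inv_cancel₀ (Nat.cast_add_one_ne_zero s), one_mul]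

lemma binom_key (x : A) (c b : K) (s : ℕ) :
    b • binomOf K x (c-1) (s+1)
      = (b - ((s : K)+1)) • binomOf K x c (s+1)
        + (x - algebraMap K A (c + s - b)) * binomOf K x c s := by
  have h2 : (x - algebraMap K A (c + s - b)) * binomOf K x c s
      = (x - algebraMap K A (c + s)) * binomOf K x c s + b • binomOf K x c s := by
    rw [map_sub,
      show x - (algebraMap K A (c + s) - algebraMap K A b)
        = (x - algebraMap K A (c + s)) + algebraMap K A b from by abel,
      add_mul, ← Algebra.smul_def]
  rw [binom_pascal, smul_add, h2, ← binom_absorb]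
  module

section comm
variable (e f h : A)

lemma e_factor (heh : e * h = h * e - (2:K) • e) (a : K) :
    e * (h - algebraMap K A a) = (h - algebraMap K A (a + 2)) * e := by
  rw [mul_sub, sub_mul, heh, (Algebra.commute_algebraMap_right a e).eq, map_add,
    add_mul, Algebra.smul_def]
  abel

lemma factor_f (hfh : h * f = f * h - (2:K) • f) (a : K) :
    (h - algebraMap K A a) * f = f * (h - algebraMap K A (a + 2)) := by
  rw [sub_mul, mul_sub, hfh, (Algebra.commute_algebraMap_left a f).eq, map_add,
    mul_add, Algebra.smul_def, (Algebra.commute_algebraMap_left (2:K) f).eq]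
  abel

lemma e_linF (heh : e * h = h * e - (2:K) • e) (c : K) (s : ℕ) :
    e * linF K h c s = linF K h (c + 2) s * e := by
  induction s with
  | zero => simp
  | succ n ih =>
    rw [linF_succ, ← mul_assoc, ih, mul_assoc, e_factor e h heh,
      show c + (n : K) + 2 = c + 2 + (n : K) from by ring, ← mul_assoc, ← linF_succ]

lemma e_binom (heh : e * h = h * e - (2:K) • e) (c : K) (s : ℕ) :
    e * binomOf K h c s = binomOf K h (c + 2) s * e := by
  rw [binomOf_eq, binomOf_eq, mul_smul_comm, smul_mul_assoc, e_linF e h heh]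

lemma e_pow_f (hef : e * f = f * e + h) (hfh : h * f = f * h - (2:K) • f) (n : ℕ) :
    e * f ^ (n+1) = f ^ (n+1) * e + ((n : K)+1) • (f ^ n * (h - algebraMap K A (n : K))) := by
  induction n with
  | zero => simp [hef, Algebra.smul_def]
  | succ n ih =>
    have expand : ∀ (c : K), f ^ (n+1) * (h - algebraMap K A c)
        = f ^ (n+1) * h - c • f ^ (n+1) := by
      intro c
      rw [mul_sub, ← Algebra.commutes c (f ^ (n+1)), ← Algebra.smul_def]
    calc e * f ^ (n+2) = (e * f ^ (n+1)) * f := by rw [pow_succ, mul_assoc]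
      _ = (f ^ (n+1) * e + ((n:K)+1) • (f ^ n * (h - algebraMap K A (n : K)))) * f := by
          rw [ih]
      _ = f ^ (n+1) * (f * e + h)
            + ((n:K)+1) • (f ^ n * (f * (h - algebraMap K A ((n:K) + 2)))) := by
          rw [add_mul, smul_mul_assoc, mul_assoc, mul_assoc, factor_f f h hfh, hef]
      _ = f ^ (n+2) * e + f ^ (n+1) * h
            + ((n:K)+1) • (f ^ (n+1) * (h - algebraMap K A ((n:K) + 2))) := by
          rw [mul_add, ← mul_assoc, ← pow_succ, ← mul_assoc, ← pow_succ]
      _ = f ^ (n+2) * e + ((((n+1 : ℕ)):K)+1) • (f ^ (n+1) * (h - algebraMap K A ((n+1 : ℕ) : K))) := by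
          rw [expand, expand, Nat.cast_succ]
          module

end comm

lemma dividedPow_def (x : A) (k : ℕ) :
    dividedPow K x k = ((k.factorial : ℕ) : K)⁻¹ • x ^ k := rfl

lemma dividedPow_zero (x : A) : dividedPow K x 0 = 1 := by simp [dividedPow]

lemma mul_dividedPow_self (x : A) (k : ℕ) :
    x * dividedPow K x k = ((k : K)+1) • dividedPow K x (k+1) := by
  rw [dividedPow_def, dividedPow_def, mul_smul_comm, ← pow_succ', smul_smul, fact_cast_succ, mul_inv,
    ← mul_assoc, mul_inv_cancel₀ (Nat.cast_add_one_ne_zero k), one_mul]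

lemma fact_inv_succ_mul (s : ℕ) :
    ((((s+1).factorial : ℕ)) : K)⁻¹ * ((s:K)+1) = (((s.factorial : ℕ)) : K)⁻¹ := by
  rw [fact_cast_succ, mul_inv, mul_comm (((s:K)+1))⁻¹, mul_assoc,
    inv_mul_cancel₀ (Nat.cast_add_one_ne_zero s), mul_one]

lemma e_mul_dpow_f (e f h : A) (hef : e * f = f * e + h)
    (hfh : h * f = f * h - (2:K) • f) (n : ℕ) :
    e * dividedPow K f (n+1)
      = dividedPow K f (n+1) * e + dividedPow K f n * (h - algebraMap K A (n : K)) := by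
  simp only [dividedPow_def]
  rw [mul_smul_comm, e_pow_f e f h hef hfh,
    smul_add, smul_smul, fact_inv_succ_mul, smul_mul_assoc, smul_mul_assoc]

/-- first-type term in the induction step. -/
def Gt (e f h : A) (ℓ m t : ℕ) : A :=
  ((ℓ:K) + 1 - (t:K)) •
    (dividedPow K f (m-t) * binomOf K h ((m:K)+(ℓ:K)+2-2*(t:K)) t * dividedPow K e (ℓ+1-t))

/-- second-type term in the induction step. -/
def Dt (f h : A) (e : A) (ℓ m t : ℕ) : A :=
  dividedPow K f (m-t) *
    ((h - algebraMap K A ((m:K)-(t:K))) * binomOf K h ((m:K)+(ℓ:K)+2-2*(t:K)) (t-1)) *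
      dividedPow K e (ℓ+1-t)

lemma claimA (e f h : A) (ℓ m t : ℕ) :
    ((ℓ:K)+1) • (dividedPow K f (m-t)
        * binomOf K h ((m:K)+((ℓ:K)+1)-2*(t:K)) t * dividedPow K e (ℓ+1-t))
      = Gt (K := K) e f h ℓ m t + (if t = 0 then 0 else Dt (K := K) f h e ℓ m t) := by
  cases t with
  | zero =>
    rw [if_pos rfl, add_zero, Gt]
    norm_num
  | succ n =>
    rw [if_neg (Nat.succ_ne_zero n), Gt, Dt, ← smul_mul_assoc, ← mul_smul_comm,
      show (m:K)+((ℓ:K)+1)-2*((n+1:ℕ):K) = ((m:K)+(ℓ:K)+2-2*((n+1:ℕ):K)) - 1 from by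
        push_cast; ring,
      binom_key h ((m:K)+(ℓ:K)+2-2*((n+1:ℕ):K)) ((ℓ:K)+1) n,
      show (m:K)+(ℓ:K)+2-2*((n+1:ℕ):K) + (n:K) - ((ℓ:K)+1) = (m:K) - ((n+1:ℕ):K) from by
        push_cast; ring,
      show ((ℓ:K)+1) - ((n:K)+1) = (ℓ:K)+1-((n+1:ℕ):K) from by push_cast; ring,
      show (n+1) - 1 = n from rfl]
    rw [mul_add, add_mul, mul_smul_comm, smul_mul_assoc]

lemma claimBm (e f h : A) (hef : e * f = f * e + h) (heh : e * h = h * e - (2:K) • e)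
    (ℓ m : ℕ) (hml : m ≤ ℓ) :
    e * (dividedPow K f (m-m) * binomOf K h ((m:K)+(ℓ:K)-2*(m:K)) m * dividedPow K e (ℓ-m))
      = Gt (K := K) e f h ℓ m m := by
  rw [Nat.sub_self, dividedPow_zero, one_mul, ← mul_assoc, e_binom e h heh, mul_assoc,
    mul_dividedPow_self, Gt, Nat.sub_self, dividedPow_zero, one_mul,
    show ℓ - m + 1 = ℓ + 1 - m from by omega,
    show ((ℓ - m : ℕ):K) + 1 = (ℓ:K)+1-(m:K) from by
      rw [Nat.cast_sub hml]; ring,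
    show (m:K)+(ℓ:K)-2*(m:K)+2 = (m:K)+(ℓ:K)+2-2*(m:K) from by ring,
    mul_smul_comm]

lemma claimB (e f h : A) (hef : e * f = f * e + h) (heh : e * h = h * e - (2:K) • e)
    (hfh : h * f = f * h - (2:K) • f)
    (ℓ m s : ℕ) (hsl : s ≤ ℓ) (hsm : s < m) :
    e * (dividedPow K f (m-s) * binomOf K h ((m:K)+(ℓ:K)-2*(s:K)) s * dividedPow K e (ℓ-s))
      = Gt (K := K) e f h ℓ m s + Dt (K := K) f h e ℓ m (s+1) := by
  have hk : m - s = (m - s - 1) + 1 := by omega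
  conv_lhs => rw [hk]
  rw [← mul_assoc, ← mul_assoc, e_mul_dpow_f e f h hef hfh, add_mul, add_mul]
  congr 1
  · -- first summand equals Gt
    rw [mul_assoc (dividedPow K f (m-s-1+1)), e_binom e h heh, ← mul_assoc, mul_assoc,
      mul_dividedPow_self, Gt, ← hk,
      show ℓ - s + 1 = ℓ + 1 - s from by omega,
      show ((ℓ - s : ℕ):K) + 1 = (ℓ:K)+1-(s:K) from by rw [Nat.cast_sub hsl]; ring,
      show (m:K)+(ℓ:K)-2*(s:K)+2 = (m:K)+(ℓ:K)+2-2*(s:K) from by ring,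
      mul_smul_comm]
  · -- second summand equals Dt
    rw [Dt,
      show (m:K) - ((s+1:ℕ):K) = ((m - (s+1) : ℕ):K) from (Nat.cast_sub (by omega)).symm,
      show m - (s+1) = m - s - 1 from by omega,
      show ℓ + 1 - (s+1) = ℓ - s from by omega,
      show (s+1) - 1 = s from rfl,
      show (m:K)+(ℓ:K)+2-2*((s+1:ℕ):K) = (m:K)+(ℓ:K)-2*(s:K) from by push_cast; ring]
    simp only [mul_assoc]

lemma main_aux (e f h : A) (hef : e * f = f * e + h) (heh : e * h = h * e - (2:K) • e)
    (hfh : h * f = f * h - (2:K) • f) (ℓ m : ℕ) :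
    dividedPow K e ℓ * dividedPow K f m
      = ∑ s ∈ Finset.range (min ℓ m + 1),
          dividedPow K f (m - s) * binomOf K h ((m : K) + (ℓ : K) - 2 * (s : K)) s
            * dividedPow K e (ℓ - s) := by
  induction ℓ with
  | zero => simp [dividedPow_zero]
  | succ ℓ IH =>
    have hinj : Function.Injective (fun y : A => ((ℓ:K)+1) • y) :=
      smul_right_injective A (Nat.cast_add_one_ne_zero ℓ)
    apply hinj
    show ((ℓ:K)+1) • _ = ((ℓ:K)+1) • _
    rw [← smul_mul_assoc, ← mul_dividedPow_self, mul_assoc, IH, Finset.mul_sum,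
      Finset.smul_sum]
    have step1 : ∀ s ∈ Finset.range (min ℓ m + 1),
        e * (dividedPow K f (m-s) * binomOf K h ((m:K)+(ℓ:K)-2*(s:K)) s
            * dividedPow K e (ℓ-s))
          = Gt (K := K) e f h ℓ m s + (if s = m then 0 else Dt (K := K) f h e ℓ m (s+1)) := by
      intro s hs
      simp only [Finset.mem_range] at hs
      by_cases hsm : s = m
      · subst hsm
        rw [if_pos rfl, add_zero]
        exact claimBm e f h hef heh ℓ s (by omega)
      · rw [if_neg hsm]
        exact claimB e f h hef heh hfh ℓ m s (by omega) (by omega)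
    have step2 : ∀ t ∈ Finset.range (min (ℓ+1) m + 1),
        ((ℓ:K)+1) • (dividedPow K f (m-t)
            * binomOf K h ((m:K)+((ℓ+1 : ℕ):K)-2*(t:K)) t * dividedPow K e (ℓ+1-t))
          = Gt (K := K) e f h ℓ m t + (if t = 0 then 0 else Dt (K := K) f h e ℓ m t) := by
      intro t _
      rw [show ((m:K)+((ℓ+1 : ℕ):K)-2*(t:K)) = (m:K)+((ℓ:K)+1)-2*(t:K) from by push_cast; ring]
      exact claimA e f h ℓ m t
    rw [Finset.sum_congr rfl step1, Finset.sum_congr rfl step2,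
      Finset.sum_add_distrib, Finset.sum_add_distrib]
    congr 1
    · -- sums of Gt agree
      rcases le_or_gt m ℓ with hml | hlm
      · rw [min_eq_right hml, min_eq_right (by omega : m ≤ ℓ+1)]
      · rw [min_eq_left (by omega : ℓ ≤ m), min_eq_left (by omega : ℓ+1 ≤ m),
          Finset.sum_range_succ (fun x => Gt (K := K) e f h ℓ m x) (ℓ+1),
          show Gt (K := K) e f h ℓ m (ℓ+1) = 0 from by
            rw [Gt, show (ℓ:K)+1-((ℓ+1:ℕ):K) = 0 from by push_cast; ring, zero_smul],
          add_zero]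
    · -- sums of Dt agree
      rw [Finset.sum_range_succ' (fun t => if t = 0 then 0 else Dt (K := K) f h e ℓ m t)
        (min (ℓ+1) m), if_pos rfl, add_zero]
      rcases le_or_gt m ℓ with hml | hlm
      · rw [min_eq_right hml, min_eq_right (by omega : m ≤ ℓ+1), Finset.sum_range_succ,
          if_pos rfl, add_zero]
        refine Finset.sum_congr rfl fun s hs => ?_
        simp only [Finset.mem_range] at hs
        rw [if_neg (by omega : ¬ s = m), if_neg (Nat.succ_ne_zero s)]
      · rw [min_eq_left (by omega : ℓ ≤ m), min_eq_left (by omega : ℓ+1 ≤ m)]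
        refine Finset.sum_congr rfl fun s hs => ?_
        simp only [Finset.mem_range] at hs
        rw [if_neg (by omega : ¬ s = m), if_neg (Nat.succ_ne_zero s)]

end Aux

/-- Let `l` be a Lie algebra over a field `K` of characteristic zero and
`E, F ∈ l` with `H := [E,F]`, `[H,E] = 2E`, `[H,F] = -2F`.  Then in `U(l)`, for all
`ℓ, m ∈ ℕ`:
`E^(ℓ) F^(m) = Σ_{s=0}^{min(ℓ,m)} F^(m-s) · C(H - m - ℓ + 2s, s) · E^(ℓ-s)`,
where `X^(k) = X^k/k!` and `C(x, s) = x(x-1)⋯(x-s+1)/s!`. -/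
theorem dividedPow_sl2_commutation
    (K : Type) [Field K] [CharZero K] (L : Type) [LieRing L] [LieAlgebra K L]
    (E F H : L) (hH : ⁅E, F⁆ = H)
    (hE : ⁅H, E⁆ = (2 : K) • E) (hF : ⁅H, F⁆ = (-2 : K) • F)
    (ℓ m : ℕ) :
    dividedPow K (UniversalEnvelopingAlgebra.ι K E) ℓ
        * dividedPow K (UniversalEnvelopingAlgebra.ι K F) m
      = ∑ s ∈ Finset.range (min ℓ m + 1),
          dividedPow K (UniversalEnvelopingAlgebra.ι K F) (m - s)
            * binomOf K (UniversalEnvelopingAlgebra.ι K H)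
                ((m : K) + (ℓ : K) - 2 * (s : K)) s
            * dividedPow K (UniversalEnvelopingAlgebra.ι K E) (ℓ - s) := by
  have hbr : ∀ X Y : L, UniversalEnvelopingAlgebra.ι K X * UniversalEnvelopingAlgebra.ι K Y
      - UniversalEnvelopingAlgebra.ι K Y * UniversalEnvelopingAlgebra.ι K X
      = UniversalEnvelopingAlgebra.ι K ⁅X, Y⁆ := by
    intro X Y
    letI := LieRing.ofAssociativeRing (A := UniversalEnvelopingAlgebra K L)
    rw [LieHom.map_lie, Ring.lie_def]
  have h1 := hbr E F; rw [hH] at h1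
  have h2 := hbr H E; rw [hE, map_smul] at h2
  have h3 := hbr H F; rw [hF, map_smul] at h3
  apply main_aux
  · rw [← h1]; abel
  · rw [sub_eq_iff_eq_add] at h2
    rw [h2]; abel
  · rw [sub_eq_iff_eq_add] at h3
    rw [h3, neg_smul]; abel
end

section
/- Let l be a Lie algebra over a field of characteristic zero, and A, B ∈ l with C := [A,B], [A,C] = 0, [B,C] = 0. Then in U(l), for all ℓ, m ∈ N: A^(ℓ) B^(m) = Σ_{q=0}^{min(ℓ,m)} B^(m-q) C^(q) A^(ℓ-q), where X^(k) := X^k/k!. -/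
section aux

variable {R : Type*} [Ring R] {a b c : R}

lemma aux_comm (h1 : a * b = b * a + c) (h3 : c * b = b * c) :
    ∀ n : ℕ, a * b ^ (n + 1) = b ^ (n + 1) * a + (n + 1) • (b ^ n * c) := by
  intro n
  induction n with
  | zero => simpa using h1
  | succ n ih =>
    have hcb : Commute c b := h3
    calc a * b ^ (n + 2) = (a * b) * b ^ (n + 1) := by
          rw [mul_assoc, ← pow_succ']
      _ = b * (a * b ^ (n + 1)) + c * b ^ (n + 1) := by
          rw [h1, add_mul, mul_assoc]
      _ = b * (b ^ (n + 1) * a + (n + 1) • (b ^ n * c)) + b ^ (n + 1) * c := by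
          rw [ih, (hcb.pow_right (n + 1)).eq]
      _ = b ^ (n + 2) * a + (n + 2) • (b ^ (n + 1) * c) := by
          rw [mul_add, ← mul_assoc, ← pow_succ', mul_smul_comm, ← mul_assoc, ← pow_succ']
          module

lemma aux_term (h1 : a * b = b * a + c) (h2 : a * c = c * a) (h3 : c * b = b * c)
    (k q j : ℕ) :
    a * (b ^ k * c ^ q * a ^ j)
      = b ^ k * c ^ q * a ^ (j + 1) + k • (b ^ (k - 1) * c ^ (q + 1) * a ^ j) := by
  have hac : Commute a c := h2
  have hacq : a * c ^ q = c ^ q * a := (hac.pow_right q).eq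
  cases k with
  | zero =>
      simp only [pow_zero, one_mul, zero_smul, add_zero, zero_nsmul]
      rw [← mul_assoc, hacq, mul_assoc, ← pow_succ']
  | succ k =>
      rw [← mul_assoc, ← mul_assoc, aux_comm h1 h3 k]
      rw [add_mul, add_mul, smul_mul_assoc, smul_mul_assoc]
      congr 1
      · rw [mul_assoc (b ^ (k+1)) a, hacq, ← mul_assoc, mul_assoc (b ^ (k+1) * c ^ q) a, ← pow_succ']
      · simp only [Nat.add_sub_cancel]
        rw [mul_assoc, mul_assoc, ← mul_assoc c, ← pow_succ', ← mul_assoc]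

end aux

lemma nat_coef (ℓ m q : ℕ) :
    ℓ.choose (q+1) * m.choose (q+1) * (q+1).factorial
      + ℓ.choose q * m.choose q * q.factorial * (m - q)
    = (ℓ+1).choose (q+1) * m.choose (q+1) * (q+1).factorial := by
  have key : m.choose (q+1) * (q+1).factorial = m.choose q * (m - q) * q.factorial := by
    rw [Nat.factorial_succ, ← mul_assoc, Nat.choose_succ_right_eq]
  calc ℓ.choose (q+1) * m.choose (q+1) * (q+1).factorial
      + ℓ.choose q * m.choose q * q.factorial * (m - q)
      = ℓ.choose (q+1) * m.choose (q+1) * (q+1).factorial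
        + ℓ.choose q * (m.choose q * (m - q) * q.factorial) := by ring
    _ = ℓ.choose (q+1) * m.choose (q+1) * (q+1).factorial
        + ℓ.choose q * (m.choose (q+1) * (q+1).factorial) := by rw [key]
    _ = (ℓ+1).choose (q+1) * m.choose (q+1) * (q+1).factorial := by
        rw [Nat.choose_succ_succ]; ring

section aux2
variable {R : Type*} [Ring R] {a b c : R}

lemma aux_main (h1 : a * b = b * a + c) (h2 : a * c = c * a) (h3 : c * b = b * c) (m : ℕ) :
    ∀ ℓ : ℕ, a ^ ℓ * b ^ m = ∑ q ∈ Finset.range (ℓ + 1),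
      (ℓ.choose q * m.choose q * q.factorial) • (b ^ (m - q) * c ^ q * a ^ (ℓ - q)) := by
  intro ℓ
  induction ℓ with
  | zero => simp
  | succ ℓ ih =>
    have step : a ^ (ℓ + 1) * b ^ m = a * (a ^ ℓ * b ^ m) := by
      rw [← mul_assoc, ← pow_succ']
    rw [step, ih, Finset.mul_sum]
    have hterm : ∀ q ∈ Finset.range (ℓ + 1),
        a * ((ℓ.choose q * m.choose q * q.factorial) • (b ^ (m - q) * c ^ q * a ^ (ℓ - q)))
          = (ℓ.choose q * m.choose q * q.factorial) • (b ^ (m - q) * c ^ q * a ^ (ℓ + 1 - q))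
            + ((ℓ.choose q * m.choose q * q.factorial) * (m - q)) •
              (b ^ (m - (q+1)) * c ^ (q + 1) * a ^ (ℓ - q)) := by
      intro q hq
      rw [Finset.mem_range] at hq
      have hq' : q ≤ ℓ := Nat.lt_succ_iff.mp hq
      rw [mul_smul_comm, aux_term h1 h2 h3 (m - q) q (ℓ - q), smul_add, smul_smul,
        show ℓ - q + 1 = ℓ + 1 - q by omega, show m - q - 1 = m - (q+1) by omega]
    rw [Finset.sum_congr rfl hterm, Finset.sum_add_distrib]
    have hext : (∑ q ∈ Finset.range (ℓ + 1),
          (ℓ.choose q * m.choose q * q.factorial) • (b ^ (m - q) * c ^ q * a ^ (ℓ + 1 - q)))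
        = ∑ q ∈ Finset.range (ℓ + 1 + 1),
          (ℓ.choose q * m.choose q * q.factorial) • (b ^ (m - q) * c ^ q * a ^ (ℓ + 1 - q)) := by
      conv_rhs => rw [Finset.sum_range_succ]
      simp [Nat.choose_succ_self]
    rw [hext,
      Finset.sum_range_succ' (fun q => (ℓ.choose q * m.choose q * q.factorial) •
        (b ^ (m - q) * c ^ q * a ^ (ℓ + 1 - q))) (ℓ + 1),
      Finset.sum_range_succ' (fun q => ((ℓ+1).choose q * m.choose q * q.factorial) •
        (b ^ (m - q) * c ^ q * a ^ (ℓ + 1 - q))) (ℓ + 1),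
      add_right_comm]
    congr 1
    · rw [← Finset.sum_add_distrib]
      refine Finset.sum_congr rfl fun q hq => ?_
      rw [show ℓ + 1 - (q + 1) = ℓ - q by omega, ← add_smul, nat_coef]
    · simp

end aux2

/-- Let `l` be a Lie algebra over a field of characteristic zero and
`A, B ∈ l` with `C := [A,B]`, `[A,C] = 0`, `[B,C] = 0`.  Then in `U(l)`, for all
`ℓ, m ∈ ℕ`:  `A^(ℓ) B^(m) = Σ_{q=0}^{min(ℓ,m)} B^(m-q) C^(q) A^(ℓ-q)`. -/
theorem dividedPow_heisenberg_commutation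
    (K : Type) [Field K] [CharZero K] (L : Type) [LieRing L] [LieAlgebra K L]
    (A B C : L) (hC : ⁅A, B⁆ = C) (hAC : ⁅A, C⁆ = 0) (hBC : ⁅B, C⁆ = 0)
    (ℓ m : ℕ) :
    dividedPow K (UniversalEnvelopingAlgebra.ι K A) ℓ
        * dividedPow K (UniversalEnvelopingAlgebra.ι K B) m
      = ∑ q ∈ Finset.range (min ℓ m + 1),
          dividedPow K (UniversalEnvelopingAlgebra.ι K B) (m - q)
            * dividedPow K (UniversalEnvelopingAlgebra.ι K C) q
            * dividedPow K (UniversalEnvelopingAlgebra.ι K A) (ℓ - q) := by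
  letI : LieRing (UniversalEnvelopingAlgebra K L) := LieRing.ofAssociativeRing
  set a := UniversalEnvelopingAlgebra.ι K A with ha
  set b := UniversalEnvelopingAlgebra.ι K B with hb
  set c := UniversalEnvelopingAlgebra.ι K C with hc
  have hlie : c = a * b - b * a := by
    calc c = UniversalEnvelopingAlgebra.ι K ⁅A, B⁆ := by rw [hC]
      _ = ⁅a, b⁆ := LieHom.map_lie _ _ _
      _ = a * b - b * a := Ring.lie_def a b
  have h1 : a * b = b * a + c := by rw [hlie]; abel
  have h2 : a * c = c * a := by
    have h := LieHom.map_lie (UniversalEnvelopingAlgebra.ι K) A C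
    rw [hAC, map_zero, Ring.lie_def] at h
    exact sub_eq_zero.mp h.symm
  have h3 : c * b = b * c := by
    have h := LieHom.map_lie (UniversalEnvelopingAlgebra.ι K) B C
    rw [hBC, map_zero, Ring.lie_def] at h
    exact (sub_eq_zero.mp h.symm).symm
  simp only [dividedPow]
  rw [smul_mul_smul_comm, aux_main h1 h2 h3 m ℓ, Finset.smul_sum]
  have hsub : Finset.range (min ℓ m + 1) ⊆ Finset.range (ℓ + 1) :=
    Finset.range_subset_range.mpr (by omega)
  have hzero : ∀ x ∈ Finset.range (ℓ + 1), x ∉ Finset.range (min ℓ m + 1) →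
      ((ℓ.factorial : K)⁻¹ * (m.factorial : K)⁻¹) •
        ((ℓ.choose x * m.choose x * x.factorial) •
          (b ^ (m - x) * c ^ x * a ^ (ℓ - x))) = 0 := by
    intro x hx hx'
    simp only [Finset.mem_range] at hx hx'
    have hmx : m.choose x = 0 := Nat.choose_eq_zero_of_lt (by omega)
    simp [hmx]
  rw [← Finset.sum_subset hsub hzero]
  refine Finset.sum_congr rfl fun q hq => ?_
  simp only [Finset.mem_range] at hq
  have hq1 : q ≤ ℓ := by omega
  have hq2 : q ≤ m := by omega
  rw [smul_mul_smul_comm, smul_mul_smul_comm, ← Nat.cast_smul_eq_nsmul K, smul_smul]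
  congr 1
  have f0 : ((q.factorial : K)) ≠ 0 := Nat.cast_ne_zero.mpr q.factorial_ne_zero
  have f1 : (((ℓ - q).factorial : K)) ≠ 0 := Nat.cast_ne_zero.mpr (ℓ - q).factorial_ne_zero
  have f2 : (((m - q).factorial : K)) ≠ 0 := Nat.cast_ne_zero.mpr (m - q).factorial_ne_zero
  have f3 : ((ℓ.factorial : K)) ≠ 0 := Nat.cast_ne_zero.mpr ℓ.factorial_ne_zero
  have f4 : ((m.factorial : K)) ≠ 0 := Nat.cast_ne_zero.mpr m.factorial_ne_zero
  rw [Nat.cast_mul, Nat.cast_mul, Nat.cast_choose K hq1, Nat.cast_choose K hq2]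
  field_simp
end
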